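/- Let A be an n×n complex Hermitian matrix (n ≥ 2), let 1 ≤ l < m ≤ n, and let S(A,x) := x* A x. Let φ^J ∈ [−π,π] be any minimizer of φ ↦ S(A, r_{l,m}(π/4,φ)) over [−π,π], let θ̃ ∈ [−π/2,π/2] be any minimizer of θ ↦ S(A, r_{l,m}(θ,φ^J)) over [−π/2,π/2], and set θ^J = θ̃ if |θ̃| ≤ π/4 and θ^J = θ̃ − sign(θ̃)·π/2 otherwise. Then the (l,m) entry of R_{l,m}(θ^J,φ^J)* · A · R_{l,m}(θ^J,φ^J) equals zero. -/

import Mathlib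

open Matrix Real Complex Finset Filter

noncomputable section

/-- The `n × n` complex plane-rotation matrix `R_{l,m}(θ,φ)`: equal to the identity except
that its `(l,l)` and `(m,m)` entries equal `cos θ`, its `(l,m)` entry equals
`e^{-iφ}·sin θ`, and its `(m,l)` entry equals `-e^{iφ}·sin θ`. -/
def planeRot (n : ℕ) (l m : Fin n) (θ φ : ℝ) : Matrix (Fin n) (Fin n) ℂ :=
  fun i j =>
    if i = l ∧ j = l then (Real.cos θ : ℂ)
    else if i = m ∧ j = m then (Real.cos θ : ℂ)
    else if i = l ∧ j = m then Complex.exp (-(φ : ℂ) * Complex.I) * (Real.sin θ : ℂ)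
    else if i = m ∧ j = l then -(Complex.exp ((φ : ℂ) * Complex.I) * (Real.sin θ : ℂ))
    else if i = j then 1 else 0

/-- `r_{l,m}(θ,φ)`: the `l`-th column of `R_{l,m}(θ,φ)`. -/
def rotCol (n : ℕ) (l m : Fin n) (θ φ : ℝ) : Fin n → ℂ :=
  fun i => planeRot n l m θ φ i l

/-- `P(A)`: the Frobenius norm of the strictly upper-triangular part of `A`. -/
def offP {n : ℕ} (A : Matrix (Fin n) (Fin n) ℂ) : ℝ :=
  Real.sqrt (∑ l, ∑ m, if l < m then ‖A l m‖ ^ 2 else 0)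

/-- The Frobenius norm of a matrix. -/
def frob {n : ℕ} (A : Matrix (Fin n) (Fin n) ℂ) : ℝ :=
  Real.sqrt (∑ i, ∑ j, ‖A i j‖ ^ 2)

/-- `B` is the result of an `η`-accurate Jacobi rotation of the Hermitian matrix `A`
at the pair `(l,m)`. -/
def JacobiStep {n : ℕ} (η : ℝ) (l m : Fin n) (A B : Matrix (Fin n) (Fin n) ℂ) : Prop :=
  ∃ θh φh ηφ ηθ : ℝ,
    |θh| ≤ π / 4 ∧ |ηφ| ≤ η ∧ |ηθ| ≤ η ∧
    φh = -Complex.arg (A l m) + ηφ ∧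
    ((A l l ≠ A m m ∧
        θh = (1 / 2) * Real.arctan (2 * ‖A l m‖ * Real.cos ηφ /
              ((A m m).re - (A l l).re)) + ηθ) ∨
      (A l l = A m m ∧ (θh = 0 ∨ θh = π / 4 ∨ θh = -(π / 4)))) ∧
    B = (planeRot n l m θh φh)ᴴ * A * planeRot n l m θh φh

/-- The pairs of one cyclic Jacobi sweep, in row (lexicographic) order
`(1,2),(1,3),…,(1,n),(2,3),…,(n−1,n)`. -/
def sweepList (n : ℕ) : List (Fin n × Fin n) :=
  (List.finRange n).flatMap fun l =>
    (List.finRange n).filterMap fun m => if l < m then some (l, m) else none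

section ObnslaHelpers

lemma rotCol_eq {n : ℕ} (l m : Fin n) (h : l ≠ m) (θ φ : ℝ) :
    rotCol n l m θ φ = fun i => if i = l then (Real.cos θ : ℂ)
      else if i = m then -(Complex.exp ((φ : ℂ) * Complex.I) * (Real.sin θ : ℂ)) else 0 := by
  funext i
  by_cases h1 : i = l <;> by_cases h2 : i = m <;>
    simp_all [rotCol, planeRot]

lemma planeRot_col_m {n : ℕ} (l m : Fin n) (h : l ≠ m) (θ φ : ℝ) :
    (fun j => planeRot n l m θ φ j m) = fun j => if j = l then
      Complex.exp (-(φ : ℂ) * Complex.I) * (Real.sin θ : ℂ)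
      else if j = m then (Real.cos θ : ℂ) else 0 := by
  funext j
  by_cases h1 : j = l <;> by_cases h2 : j = m <;>
    simp_all [planeRot, Ne.symm h]

lemma quad2 {n : ℕ} (A : Matrix (Fin n) (Fin n) ℂ) (l m : Fin n) (h : l ≠ m) (u v p q : ℂ) :
    star (fun i => if i = l then u else if i = m then v else 0) ⬝ᵥ
      A.mulVec (fun i => if i = l then p else if i = m then q else 0) =
    (starRingEnd ℂ) u * (A l l * p + A l m * q) +
      (starRingEnd ℂ) v * (A m l * p + A m m * q) := by
  have hx : (fun i => if i = l then u else if i = m then v else 0)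
      = u • (Pi.single l 1 : Fin n → ℂ) + v • (Pi.single m 1 : Fin n → ℂ) := by
    funext i
    by_cases h1 : i = l <;> by_cases h2 : i = m <;>
      simp_all [Pi.single_apply]
  have hy : (fun i => if i = l then p else if i = m then q else 0)
      = p • (Pi.single l 1 : Fin n → ℂ) + q • (Pi.single m 1 : Fin n → ℂ) := by
    funext i
    by_cases h1 : i = l <;> by_cases h2 : i = m <;>
      simp_all [Pi.single_apply]
  have hs : ∀ i : Fin n, star (Pi.single i (1:ℂ) : Fin n → ℂ) = Pi.single i 1 := by
    intro i; funext j; simp [Pi.single_apply, apply_ite (star : ℂ → ℂ)]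
  rw [hx, hy]
  simp [Matrix.mulVec_add, Matrix.mulVec_smul, Matrix.mulVec_single, dotProduct_add,
    dotProduct_smul, star_add, star_smul, add_dotProduct, smul_dotProduct,
    single_dotProduct, hs]
  ring

lemma entry_eq {n : ℕ} (M A : Matrix (Fin n) (Fin n) ℂ) (l m : Fin n) :
    (Mᴴ * A * M) l m = star (fun i => M i l) ⬝ᵥ A.mulVec (fun j => M j m) := by
  simp only [Matrix.mul_apply, Matrix.conjTranspose_apply, Matrix.mulVec, dotProduct,
    Pi.star_apply, Finset.sum_mul, Finset.mul_sum]
  rw [Finset.sum_comm]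
  apply Finset.sum_congr rfl; intro i _
  apply Finset.sum_congr rfl; intro j _
  ring

variable {n : ℕ} (A : Matrix (Fin n) (Fin n) ℂ) (l m : Fin n)

lemma Sval (h : l ≠ m) (hA : A.IsHermitian) (θ φ : ℝ) :
    (star (rotCol n l m θ φ) ⬝ᵥ A.mulVec (rotCol n l m θ φ)).re
      = (A l l).re * Real.cos θ ^ 2 + (A m m).re * Real.sin θ ^ 2
        - 2 * (Real.sin θ * Real.cos θ) * (Complex.exp ((φ:ℂ) * Complex.I) * A l m).re := by
  have hAll : A l l = ((A l l).re : ℂ) := (Complex.conj_eq_iff_re.mp (hA.apply l l)).symm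
  have hAmm : A m m = ((A m m).re : ℂ) := (Complex.conj_eq_iff_re.mp (hA.apply m m)).symm
  have hAml : A m l = (starRingEnd ℂ) (A l m) := (hA.apply m l).symm
  rw [rotCol_eq l m h, quad2 A l m h]
  set c := A l m with hc
  set E := Complex.exp ((φ:ℂ) * Complex.I) with hE
  have hEconj : (starRingEnd ℂ) E = Complex.exp (-(φ:ℂ) * Complex.I) := by
    rw [hE, ← Complex.exp_conj]; congr 1; simp
  have hEE : Complex.exp (-(φ:ℂ) * Complex.I) * E = 1 := by
    rw [hE, ← Complex.exp_add]; ring_nf; exact Complex.exp_zero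
  have key : (starRingEnd ℂ) ((Real.cos θ : ℂ)) * (A l l * (Real.cos θ : ℂ) + c * -(E * (Real.sin θ : ℂ)))
      + (starRingEnd ℂ) (-(E * (Real.sin θ : ℂ))) * (A m l * (Real.cos θ : ℂ) + A m m * -(E * (Real.sin θ : ℂ)))
      = (((A l l).re * Real.cos θ ^ 2 + (A m m).re * Real.sin θ ^ 2 : ℝ) : ℂ)
        + ((-(Real.sin θ * Real.cos θ) : ℝ) : ℂ) * (E * c + (starRingEnd ℂ) (E * c)) := by
    rw [hAml]
    nth_rewrite 1 [hAll]
    nth_rewrite 1 [hAmm]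
    have h1 : (starRingEnd ℂ) ((Real.cos θ : ℂ)) = (Real.cos θ : ℂ) := Complex.conj_ofReal _
    have h2 : (starRingEnd ℂ) (E * (Real.sin θ : ℂ)) = Complex.exp (-(φ:ℂ) * Complex.I) * (Real.sin θ : ℂ) := by
      rw [_root_.map_mul, hEconj, Complex.conj_ofReal]
    have h3 : (starRingEnd ℂ) (E * c) = Complex.exp (-(φ:ℂ) * Complex.I) * (starRingEnd ℂ) c := by
      rw [_root_.map_mul, hEconj]
    rw [map_neg, h1, h2, h3]
    simp only [Complex.ofReal_add, Complex.ofReal_mul, Complex.ofReal_pow, Complex.ofReal_neg]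
    linear_combination ((A m m).re : ℂ) * (Real.sin θ : ℂ)^2 * hEE
  rw [key, Complex.add_conj]
  simp only [← Complex.ofReal_ofNat, ← Complex.ofReal_mul, ← Complex.ofReal_add, Complex.ofReal_re]
  ring

end ObnslaHelpers

/-- the rotation angles obtained by the two successive line searches of
Theorem 1 zero out the `(l,m)` entry of the rotated matrix. -/
theorem obnsla_two_line_searches_zero_entry
    {n : ℕ} (hn : 2 ≤ n) (A : Matrix (Fin n) (Fin n) ℂ) (hA : A.IsHermitian)
    (l m : Fin n) (hlm : l < m)
    (φJ θt θJ : ℝ)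
    (hφJmem : φJ ∈ Set.Icc (-π) π)
    (hφJmin : ∀ φ ∈ Set.Icc (-π) π,
      (star (rotCol n l m (π / 4) φJ) ⬝ᵥ A.mulVec (rotCol n l m (π / 4) φJ)).re ≤
      (star (rotCol n l m (π / 4) φ) ⬝ᵥ A.mulVec (rotCol n l m (π / 4) φ)).re)
    (hθtmem : θt ∈ Set.Icc (-(π / 2)) (π / 2))
    (hθtmin : ∀ θ ∈ Set.Icc (-(π / 2)) (π / 2),
      (star (rotCol n l m θt φJ) ⬝ᵥ A.mulVec (rotCol n l m θt φJ)).re ≤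
      (star (rotCol n l m θ φJ) ⬝ᵥ A.mulVec (rotCol n l m θ φJ)).re)
    (hθJ : θJ = if |θt| ≤ π / 4 then θt
                else θt - (if 0 < θt then (1 : ℝ) else -1) * (π / 2)) :
    ((planeRot n l m θJ φJ)ᴴ * A * planeRot n l m θJ φJ) l m = 0 := by
  have hlm' : l ≠ m := ne_of_lt hlm
  set a := (A l l).re with ha
  set d := (A m m).re with hd
  set c := A l m with hc
  set β := ‖c‖ with hβ
  set E := Complex.exp ((φJ:ℂ) * Complex.I) with hE
  set Eb := Complex.exp (-(φJ:ℂ) * Complex.I) with hEb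
  have hEE : Eb * E = 1 := by
    rw [hE, hEb, ← Complex.exp_add]; ring_nf; exact Complex.exp_zero
  -- Step 1 : (E * c).re = β
  have h1 : (E * c).re = β := by
    have hle : (E * c).re ≤ β := by
      calc (E * c).re ≤ ‖E * c‖ := Complex.re_le_norm _
        _ = β := by rw [norm_mul, hE, Complex.norm_exp_ofReal_mul_I, one_mul]
    have hmem : -Complex.arg c ∈ Set.Icc (-π) π :=
      ⟨by linarith [Complex.arg_le_pi c], by linarith [Complex.neg_pi_lt_arg c]⟩
    have hineq := hφJmin _ hmem
    simp only [Sval A l m hlm' hA] at hineq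
    rw [← hc] at hineq
    have harg : (Complex.exp (((-Complex.arg c : ℝ):ℂ) * Complex.I) * c).re = β := by
      by_cases hc0 : c = 0
      · simp [hc0, hβ]
      · have habs0 : β ≠ 0 := by
          rw [hβ]; exact norm_ne_zero_iff.mpr hc0
        rw [Complex.mul_re, Complex.exp_ofReal_mul_I_re, Complex.exp_ofReal_mul_I_im,
          Real.cos_neg, Real.sin_neg, Complex.cos_arg hc0, Complex.sin_arg]
        have hsq : c.re^2 + c.im^2 = β^2 := by
          rw [hβ, Complex.sq_norm, Complex.normSq_apply]; ring
        field_simp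
        linear_combination hsq
    have hsc : Real.sin (π/4) * Real.cos (π/4) = 1/2 := by
      rw [Real.sin_pi_div_four, Real.cos_pi_div_four]
      rw [div_mul_div_comm, Real.mul_self_sqrt (by norm_num : (0:ℝ) ≤ 2)]
      norm_num
    rw [harg] at hineq
    rw [hsc] at hineq
    have hge : β ≤ (E * c).re := by rw [hE]; linarith
    linarith
  -- Step 1b : c = β * exp(-iφJ)
  have hw : E * c = (β : ℂ) := by
    have habs : ‖E * c‖ = β := by
      rw [norm_mul, hE, Complex.norm_exp_ofReal_mul_I, one_mul]
    have hsq := Complex.sq_norm (E * c)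
    rw [Complex.normSq_apply, habs, ← h1] at hsq
    have him : (E * c).im = 0 := by nlinarith [sq_nonneg ((E*c).im)]
    apply Complex.ext <;> simp [h1, him]
  have hc2 : c = (β : ℂ) * Eb := by linear_combination Eb * hw - c * hEE
  -- Step 2 : stationarity at θt
  have hSθ : ∀ θ : ℝ, (star (rotCol n l m θ φJ) ⬝ᵥ A.mulVec (rotCol n l m θ φJ)).re
      = (a + d)/2 + (a - d)/2 * Real.cos (2*θ) - β * Real.sin (2*θ) := by
    intro θ
    rw [Sval A l m hlm' hA, ← hE, h1, Real.cos_two_mul, Real.sin_two_mul]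
    linear_combination d * Real.sin_sq_add_cos_sq θ
  set α := (a - d)/2 with hα
  have h2 : α * Real.sin (2*θt) + β * Real.cos (2*θt) = 0 := by
    by_cases hz : α = 0 ∧ β = 0
    · rw [hz.1, hz.2]; ring
    · set z : ℂ := Complex.mk (-α) β with hzdef
      have hzre : z.re = -α := rfl
      have hzim : z.im = β := rfl
      have hz0 : z ≠ 0 := by
        intro h0
        apply hz
        constructor
        · have := congrArg Complex.re h0; simp [hzre] at this; linarith
        · have := congrArg Complex.im h0; simp [hzim] at this; linarith
      set R := ‖z‖ with hR
      have hRpos : 0 < R := by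
        rw [hR]; exact (norm_pos_iff.mpr hz0)
      have hR2 : R^2 = α^2 + β^2 := by
        rw [hR, Complex.sq_norm, Complex.normSq_apply, hzre, hzim]; ring
      have hmem : Complex.arg z / 2 ∈ Set.Icc (-(π/2)) (π/2) :=
        ⟨by linarith [Complex.neg_pi_lt_arg z], by linarith [Complex.arg_le_pi z]⟩
      have hmin := hθtmin _ hmem
      rw [hSθ, hSθ] at hmin
      rw [show 2 * (Complex.arg z / 2) = Complex.arg z from by ring] at hmin
      rw [Complex.cos_arg hz0, Complex.sin_arg, hzre, hzim, ← hR] at hmin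
      have hX : α * Real.cos (2*θt) - β * Real.sin (2*θt) ≤ -R := by
        have : α * (-α / R) - β * (β / R) = -R := by
          field_simp
          linear_combination hR2
        linarith
      set X := α * Real.cos (2*θt) - β * Real.sin (2*θt) with hXdef
      set Y := α * Real.sin (2*θt) + β * Real.cos (2*θt) with hYdef
      have hXY : X^2 + Y^2 = R^2 := by
        rw [hXdef, hYdef]
        linear_combination (α^2 + β^2) * Real.sin_sq_add_cos_sq (2*θt) - hR2
      have hY2 : Y^2 = 0 := by nlinarith
      exact sq_eq_zero_iff.mp hY2
  -- Step 3 : stationarity at θJ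
  have h3 : α * Real.sin (2*θJ) + β * Real.cos (2*θJ) = 0 := by
    by_cases habs : |θt| ≤ π/4
    · rw [hθJ, if_pos habs]; exact h2
    · by_cases hpos : 0 < θt
      · have h2θ : 2*θJ = 2*θt - π := by rw [hθJ, if_neg habs, if_pos hpos]; ring
        rw [h2θ, Real.sin_sub, Real.cos_sub, Real.sin_pi, Real.cos_pi]
        linarith [h2]
      · have h2θ : 2*θJ = 2*θt + π := by rw [hθJ, if_neg habs, if_neg hpos]; ring
        rw [h2θ, Real.sin_add, Real.cos_add, Real.sin_pi, Real.cos_pi]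
        linarith [h2]
  -- Step 4 : the entry vanishes
  have hreal : (a - d) * (Real.sin θJ * Real.cos θJ) + β * (Real.cos θJ^2 - Real.sin θJ^2) = 0 := by
    rw [Real.sin_two_mul, Real.cos_two_mul] at h3
    linear_combination h3 - β * Real.sin_sq_add_cos_sq θJ
  have hrealC : ((a:ℂ) - d) * ((Real.sin θJ : ℂ) * (Real.cos θJ : ℂ))
      + (β:ℂ) * ((Real.cos θJ : ℂ)^2 - (Real.sin θJ : ℂ)^2) = 0 := by
    have := congrArg (fun x : ℝ => (x:ℂ)) hreal
    simp only [Complex.ofReal_add, Complex.ofReal_sub, Complex.ofReal_mul,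
      Complex.ofReal_pow, Complex.ofReal_zero] at this
    exact this
  have hAll : A l l = ((A l l).re : ℂ) := (Complex.conj_eq_iff_re.mp (hA.apply l l)).symm
  have hAmm : A m m = ((A m m).re : ℂ) := (Complex.conj_eq_iff_re.mp (hA.apply m m)).symm
  have hAml : A m l = (starRingEnd ℂ) c := (hA.apply m l).symm
  have hEbconj : (starRingEnd ℂ) E = Eb := by
    rw [hE, hEb, ← Complex.exp_conj]; congr 1; simp
  have hcconj : (starRingEnd ℂ) c = (β:ℂ) * E := by
    rw [hc2, _root_.map_mul, Complex.conj_ofReal, hEb, ← Complex.exp_conj]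
    congr 2; simp
  rw [entry_eq, show (fun i => planeRot n l m θJ φJ i l) = _ from rotCol_eq l m hlm' θJ φJ,
    planeRot_col_m l m hlm' θJ φJ, quad2 A l m hlm']
  rw [hAml, hcconj, map_neg, _root_.map_mul, hEbconj, Complex.conj_ofReal, Complex.conj_ofReal]
  rw [hAll, hAmm, ← ha, ← hd]
  rw [← hc, hc2, ← hEb]
  linear_combination Eb * hrealC + (-(β:ℂ) * (Real.sin θJ : ℂ)^2 * Eb) * hEE

end
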